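/- A series F ∈ 1 + x·ℤ((q^{1/2}))[[x]] is admissible if and only if F = exp(-∑_{n,m≥1} f_n(q^{m/2})/(m(1-q^m)) · x^{nm}) for some Laurent polynomials f_n ∈ ℤ[t^{±1}]. -/

import Mathlib

/- STATEMENT 15: F ∈ 1 + x·ℤ((q^{1/2}))[[x]] is admissible iff
   F = exp(-∑_{n,m≥1} f_n(q^{m/2})/(m(1-q^m)) x^{nm}) for Laurent polynomials f_n ∈ ℤ[t^{±1}].
   Conventions: K = ℚ((s)), s = q^{1/2}; f_n is recorded by its finitely supported
   coefficient function ℤ →₀ ℤ, so f_n(q^{m/2}) = ∑_i f_n(i)·s^{mi}; the exponential is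
   computed degreewise by its (truncated) Taylor series. -/

namespace Stmt15

noncomputable section

abbrev K := LaurentSeries ℚ

def sp (m : ℤ) : K := HahnSeries.single m 1

def qq : K := sp 2

def qfac (j : ℕ) : K := ∏ l ∈ Finset.range j, (1 - qq ^ (l + 1))

def poch (n : ℕ) (a : K) : PowerSeries K :=
  PowerSeries.mk fun k =>
    if n ∣ k ∧ n ≠ 0 then
      (-1 : K) ^ (k / n) * qq ^ ((k / n) * (k / n - 1) / 2) * a ^ (k / n) / qfac (k / n)
    else 0

def zpw (f : PowerSeries K) (c : ℤ) : PowerSeries K :=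
  f ^ c.toNat * Ring.inverse f ^ (-c).toNat

def Admissible (F : PowerSeries K) : Prop :=
  ∃ c : ℕ → (ℤ →₀ ℤ),
    ∀ k, PowerSeries.coeff (R := K) k F =
      PowerSeries.coeff (R := K) k
        (∏ n ∈ Finset.Icc 1 k, ∏ i ∈ (c n).support, zpw (poch n (sp i)) (c n i))

/-- `L(f) = -∑_{n,m≥1} f_n(q^{m/2})/(m(1-q^m)) · x^{nm}`:  the coefficient of `x^k` (k ≥ 1)
is `-∑_{m ∣ k} f_{k/m}(s^m)/(m(1-q^m))`. -/
def Lser (f : ℕ → (ℤ →₀ ℤ)) : PowerSeries K :=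
  PowerSeries.mk fun k =>
    if k = 0 then 0
    else
      -∑ m ∈ k.divisors,
        (∑ i ∈ (f (k / m)).support, HahnSeries.single ((m : ℤ) * i) ((f (k / m) i : ℚ))) /
          ((m : K) * (1 - qq ^ m))

/-- The exponential of a power series with zero constant term, computed degreewise. -/
def Eexp (L : PowerSeries K) : PowerSeries K :=
  PowerSeries.mk fun k =>
    PowerSeries.coeff (R := K) k
      (∑ j ∈ Finset.range (k + 1), PowerSeries.C (R := K) ((j.factorial : K))⁻¹ * L ^ j)

open PowerSeries

instance : CharZero K := charZero_of_injective_algebraMap (algebraMap ℚ K).injective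

lemma coeff_pow_eq_zero {L : PowerSeries K} (hL : constantCoeff (R := K) L = 0) {k j : ℕ}
    (h : k < j) : coeff (R := K) k (L ^ j) = 0 := by
  have hdvd : (X : PowerSeries K) ^ j ∣ L ^ j := pow_dvd_pow_of_dvd (X_dvd_iff.2 hL) j
  rw [X_pow_dvd_iff] at hdvd
  exact hdvd k h

lemma coeff_Eexp_trunc {L : PowerSeries K} (hL : constantCoeff (R := K) L = 0) {k N : ℕ}
    (h : k < N) :
    coeff (R := K) k (Eexp L) =
      coeff (R := K) k (∑ j ∈ Finset.range N, PowerSeries.C (R := K) ((j.factorial : K))⁻¹ * L ^ j) := by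
  rw [Eexp, coeff_mk]
  rw [← Finset.sum_range_add_sum_Ico _ (Nat.succ_le_of_lt h)]
  rw [map_add, left_eq_add, map_sum]
  apply Finset.sum_eq_zero
  intro j hj
  rw [Finset.mem_Ico] at hj
  rw [coeff_C_mul, coeff_pow_eq_zero hL (lt_of_lt_of_le (Nat.lt_succ_self k) hj.1), mul_zero]

lemma deriv_trunc_sum (L : PowerSeries K) (N : ℕ) :
    d⁄dX K (∑ j ∈ Finset.range (N + 1), PowerSeries.C (R := K) ((j.factorial : K))⁻¹ * L ^ j)
      = (d⁄dX K L) * ∑ j ∈ Finset.range N, PowerSeries.C (R := K) ((j.factorial : K))⁻¹ * L ^ j := by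
  rw [Finset.sum_range_succ', map_add, map_sum, Finset.mul_sum]
  have h0 : d⁄dX K (PowerSeries.C (R := K) ((Nat.factorial 0 : K))⁻¹ * (L ^ 0)) = 0 := by
    simp
  rw [h0, add_zero]
  apply Finset.sum_congr rfl
  intro j _
  rw [← smul_eq_C_mul, Derivation.map_smul, Derivation.leibniz_pow]
  rw [Nat.add_sub_cancel, smul_eq_mul, nsmul_eq_mul, smul_eq_C_mul]
  have hfac : ((j + 1).factorial : K)⁻¹ * (((j + 1 : ℕ) : K)) = ((j.factorial : K))⁻¹ := by
    rw [Nat.factorial_succ]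
    push_cast
    have h1 : ((j : K) + 1) ≠ 0 := Nat.cast_add_one_ne_zero j
    rw [mul_inv, mul_comm ((j : K) + 1)⁻¹, mul_assoc, inv_mul_cancel₀ h1, mul_one]
  rw [← map_natCast (PowerSeries.C (R := K)) (j + 1), ← mul_assoc, ← map_mul, hfac]
  ring

lemma ode_unique {f g h : PowerSeries K}
    (h0 : coeff (R := K) 0 f = coeff (R := K) 0 g)
    (hf : d⁄dX K f = h * f) (hg : d⁄dX K g = h * g) : f = g := by
  apply PowerSeries.ext
  intro k
  induction k using Nat.strong_induction_on with
  | _ k ih =>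
    match k with
    | 0 => exact h0
    | k + 1 =>
      have e1 : coeff (R := K) k (d⁄dX K f) = coeff (R := K) k (d⁄dX K g) := by
        rw [hf, hg, coeff_mul, coeff_mul]
        apply Finset.sum_congr rfl
        intro p hp
        rw [Finset.HasAntidiagonal.mem_antidiagonal] at hp
        have : p.2 < k + 1 := Nat.lt_succ_of_le (hp ▸ Nat.le_add_left p.2 p.1)
        rw [ih p.2 this]
      rw [coeff_derivative, coeff_derivative] at e1
      have hne : ((k : K) + 1) ≠ 0 := Nat.cast_add_one_ne_zero k
      exact mul_right_cancel₀ hne e1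

lemma Eexp_ode {L : PowerSeries K} (hL : constantCoeff (R := K) L = 0) :
    d⁄dX K (Eexp L) = (d⁄dX K L) * Eexp L := by
  apply PowerSeries.ext
  intro k
  have e1 : coeff (R := K) k (d⁄dX K (Eexp L)) =
      coeff (R := K) k (d⁄dX K (∑ j ∈ Finset.range (k + 2),
        PowerSeries.C (R := K) ((j.factorial : K))⁻¹ * L ^ j)) := by
    rw [coeff_derivative, coeff_derivative, coeff_Eexp_trunc hL (by omega : k + 1 < k + 2)]
  rw [e1, deriv_trunc_sum L (k + 1), coeff_mul, coeff_mul]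
  apply Finset.sum_congr rfl
  intro p hp
  rw [Finset.HasAntidiagonal.mem_antidiagonal] at hp
  have hp2 : p.2 < k + 1 := Nat.lt_succ_of_le (hp ▸ Nat.le_add_left p.2 p.1)
  rw [coeff_Eexp_trunc hL hp2]

lemma constantCoeff_Eexp (L : PowerSeries K) : coeff (R := K) 0 (Eexp L) = 1 := by
  rw [Eexp, coeff_mk]
  simp

lemma Eexp_add {A B : PowerSeries K} (hA : constantCoeff (R := K) A = 0)
    (hB : constantCoeff (R := K) B = 0) : Eexp (A + B) = Eexp A * Eexp B := by
  apply ode_unique (h := d⁄dX K A + d⁄dX K B)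
  · simp [coeff_mul, constantCoeff_Eexp]
  · rw [← map_add, Eexp_ode (by rw [map_add, hA, hB, add_zero]), map_add]
  · rw [Derivation.leibniz, Eexp_ode hA, Eexp_ode hB, smul_eq_mul, smul_eq_mul]
    ring

lemma Eexp_zero : Eexp (0 : PowerSeries K) = 1 := by
  apply PowerSeries.ext
  intro k
  rw [Eexp, coeff_mk]
  rw [Finset.sum_eq_single 0]
  · simp
  · intro j _ hj
    rw [zero_pow hj, mul_zero]
  · intro h
    exact absurd (Finset.mem_range.2 (Nat.succ_pos k)) h

lemma Eexp_nsmul {L : PowerSeries K} (hL : constantCoeff (R := K) L = 0) (m : ℕ) :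
    Eexp (m • L) = Eexp L ^ m := by
  induction m with
  | zero => rw [zero_smul, Eexp_zero, pow_zero]
  | succ m ih =>
    rw [succ_nsmul, Eexp_add (by simp [map_nsmul, hL]) hL, ih, pow_succ]

lemma Eexp_mul_neg {L : PowerSeries K} (hL : constantCoeff (R := K) L = 0) :
    Eexp L * Eexp (-L) = 1 := by
  rw [← Eexp_add hL (by rw [map_neg, hL, neg_zero]), add_neg_cancel, Eexp_zero]

lemma Eexp_ne_zero (L : PowerSeries K) : Eexp L ≠ 0 := by
  intro h
  apply one_ne_zero (α := K)
  rw [← constantCoeff_Eexp L, h, map_zero]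

lemma inverse_Eexp {L : PowerSeries K} (hL : constantCoeff (R := K) L = 0) :
    Ring.inverse (Eexp L) = Eexp (-L) := by
  have h1 := Eexp_mul_neg hL
  have h2 : Eexp (-L) * Eexp L = 1 := by rw [mul_comm]; exact h1
  exact Ring.inverse_unit ⟨Eexp L, Eexp (-L), h1, h2⟩

lemma zpw_Eexp {L : PowerSeries K} (hL : constantCoeff (R := K) L = 0) (c : ℤ) :
    zpw (Eexp L) c = Eexp (c • L) := by
  rcases le_or_gt 0 c with h | h
  · have h1 : (-c).toNat = 0 := by omega
    rw [zpw, h1, pow_zero, mul_one]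
    rw [← Eexp_nsmul hL, ← natCast_zsmul, Int.toNat_of_nonneg h]
  · have h1 : c.toNat = 0 := by omega
    rw [zpw, h1, pow_zero, one_mul, inverse_Eexp hL]
    rw [← Eexp_nsmul (by rw [map_neg, hL, neg_zero]), ← natCast_zsmul,
      Int.toNat_of_nonneg (by omega : (0:ℤ) ≤ -c), neg_smul, smul_neg, neg_neg]

lemma prod_Eexp {α : Type} (s : Finset α) (g : α → PowerSeries K)
    (hg : ∀ a ∈ s, constantCoeff (R := K) (g a) = 0) :
    ∏ a ∈ s, Eexp (g a) = Eexp (∑ a ∈ s, g a) := by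
  induction s using Finset.cons_induction with
  | empty => simp [Eexp_zero]
  | cons a s ha ih =>
    rw [Finset.prod_cons, Finset.sum_cons,
      Eexp_add (hg a (Finset.mem_cons_self a s))
        (by rw [map_sum]; exact Finset.sum_eq_zero fun b hb => hg b (Finset.mem_cons_of_mem hb)),
      ih fun b hb => hg b (Finset.mem_cons_of_mem hb)]


def Lam (a : K) : PowerSeries K :=
  PowerSeries.mk fun k => if k = 0 then 0 else -a ^ k / (k : K)

def Geo (a : K) : PowerSeries K := PowerSeries.mk fun k => a ^ k

lemma geo_mul (a : K) : Geo a * (1 - C (R := K) a * X) = 1 := by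
  apply PowerSeries.ext
  intro k
  rw [mul_sub, mul_one, mul_left_comm, map_sub, coeff_C_mul]
  cases k with
  | zero => simp [Geo, coeff_zero_mul_X]
  | succ k =>
    rw [coeff_succ_mul_X, Geo, coeff_mk, coeff_mk, coeff_one, if_neg (Nat.succ_ne_zero k),
      pow_succ]
    ring

lemma deriv_Lam (a : K) : d⁄dX K (Lam a) = - C (R := K) a * Geo a := by
  apply PowerSeries.ext
  intro k
  rw [coeff_derivative, Lam, coeff_mk, if_neg (Nat.succ_ne_zero k),
    show (-(C (R := K) a) * Geo a) = C (R := K) (-a) * Geo a by rw [map_neg],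
    coeff_C_mul, Geo, coeff_mk]
  have hne : ((k : K) + 1) ≠ 0 := Nat.cast_add_one_ne_zero k
  push_cast
  field_simp
  ring

lemma constantCoeff_Lam (a : K) : constantCoeff (R := K) (Lam a) = 0 := by
  rw [← coeff_zero_eq_constantCoeff_apply, Lam, coeff_mk, if_pos rfl]

lemma Eexp_Lam (a : K) : Eexp (Lam a) = 1 - C (R := K) a * X := by
  apply ode_unique (h := d⁄dX K (Lam a))
  · rw [constantCoeff_Eexp]
    simp [coeff_zero_mul_X]
  · exact Eexp_ode (constantCoeff_Lam a)
  · have hd : d⁄dX K (1 - C (R := K) a * X) = - C (R := K) a := by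
      rw [map_sub, Derivation.map_one_eq_zero,
        show (C (R := K) a * X : PowerSeries K) = a • X from (smul_eq_C_mul X a).symm,
        Derivation.map_smul, derivative_X, smul_eq_C_mul, mul_one, zero_sub]
    rw [hd, deriv_Lam, mul_assoc, geo_mul, mul_one]

lemma qq_pow (k : ℕ) : qq ^ k = HahnSeries.single (2 * k : ℤ) 1 := by
  rw [qq, sp, HahnSeries.single_pow, one_pow, nsmul_eq_mul]
  push_cast
  ring_nf

lemma one_sub_qq_pow_ne_zero {k : ℕ} (hk : k ≠ 0) : (1 : K) - qq ^ k ≠ 0 := by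
  intro h
  have h2 : ((1 : K) - qq ^ k).coeff 0 = (0 : K).coeff 0 := by rw [h]
  rw [HahnSeries.coeff_sub, qq_pow, HahnSeries.coeff_zero, HahnSeries.coeff_one,
    HahnSeries.coeff_single_of_ne (by omega : (0:ℤ) ≠ 2 * k), if_pos rfl, sub_zero] at h2
  exact one_ne_zero h2

lemma qfac_ne_zero (j : ℕ) : qfac j ≠ 0 := by
  rw [qfac]
  exact Finset.prod_ne_zero_iff.2 fun l _ => one_sub_qq_pow_ne_zero (Nat.succ_ne_zero l)

lemma coeff_one_sub_mul (a : K) (h : PowerSeries K) (k : ℕ) :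
    coeff (R := K) (k + 1) ((1 - C (R := K) a * X) * h) = coeff (R := K) (k + 1) h - a * coeff (R := K) k h := by
  rw [sub_mul, one_mul, map_sub, mul_assoc, coeff_C_mul, coeff_succ_X_mul]

lemma coeff_zero_one_sub_mul (a : K) (h : PowerSeries K) :
    coeff (R := K) 0 ((1 - C (R := K) a * X) * h) = coeff (R := K) 0 h := by
  rw [sub_mul, one_mul, map_sub, mul_assoc, coeff_C_mul]
  rw [show (X * h : PowerSeries K) = h * X from mul_comm _ _, coeff_zero_mul_X, mul_zero,
    sub_zero]

lemma fe_unique {f g : PowerSeries K} (a : K)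
    (h0 : coeff (R := K) 0 f = coeff (R := K) 0 g)
    (hf : f = (1 - C (R := K) a * X) * rescale qq f)
    (hg : g = (1 - C (R := K) a * X) * rescale qq g) : f = g := by
  apply PowerSeries.ext
  intro k
  induction k using Nat.strong_induction_on with
  | _ k ih =>
    match k with
    | 0 => exact h0
    | k + 1 =>
      have ef : coeff (R := K) (k + 1) f =
          qq ^ (k + 1) * coeff (R := K) (k + 1) f - a * (qq ^ k * coeff (R := K) k f) := by
        conv_lhs => rw [hf]
        rw [coeff_one_sub_mul, coeff_rescale, coeff_rescale]
      have eg : coeff (R := K) (k + 1) g =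
          qq ^ (k + 1) * coeff (R := K) (k + 1) g - a * (qq ^ k * coeff (R := K) k g) := by
        conv_lhs => rw [hg]
        rw [coeff_one_sub_mul, coeff_rescale, coeff_rescale]
      have hk : coeff (R := K) k f = coeff (R := K) k g := ih k (Nat.lt_succ_self k)
      have hz : (1 - qq ^ (k + 1)) * (coeff (R := K) (k + 1) f - coeff (R := K) (k + 1) g) = 0 := by
        linear_combination ef - eg - a * qq ^ k * hk
      rcases mul_eq_zero.1 hz with h | h
      · exact absurd h (one_sub_qq_pow_ne_zero (Nat.succ_ne_zero k))
      · exact sub_eq_zero.1 h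

lemma Eexp_rescale (c : K) (L : PowerSeries K) :
    Eexp (rescale c L) = rescale c (Eexp L) := by
  apply PowerSeries.ext
  intro k
  rw [coeff_rescale, Eexp, Eexp, coeff_mk, coeff_mk, map_sum, map_sum, Finset.mul_sum]
  apply Finset.sum_congr rfl
  intro j _
  rw [coeff_C_mul, coeff_C_mul, ← map_pow, coeff_rescale]
  ring

def L1 (a : K) : PowerSeries K :=
  PowerSeries.mk fun k => if k = 0 then 0 else -a ^ k / ((k : K) * (1 - qq ^ k))

lemma constantCoeff_L1 (a : K) : constantCoeff (R := K) (L1 a) = 0 := by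
  rw [← coeff_zero_eq_constantCoeff_apply, L1, coeff_mk, if_pos rfl]

lemma L1_fe (a : K) : L1 a = Lam a + rescale qq (L1 a) := by
  apply PowerSeries.ext
  intro k
  rw [map_add, coeff_rescale, L1, Lam, coeff_mk, coeff_mk]
  cases k with
  | zero => simp
  | succ k =>
    rw [if_neg (Nat.succ_ne_zero k), if_neg (Nat.succ_ne_zero k)]
    have h1 : ((k : K) + 1) ≠ 0 := Nat.cast_add_one_ne_zero k
    have h2 : (1 : K) - qq ^ (k + 1) ≠ 0 := one_sub_qq_pow_ne_zero (Nat.succ_ne_zero k)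
    push_cast
    rw [← mul_div_assoc, div_add_div _ _ h1 (mul_ne_zero h1 h2),
      div_eq_div_iff (mul_ne_zero h1 h2) (mul_ne_zero h1 (mul_ne_zero h1 h2))]
    ring

lemma tri (k : ℕ) : (k + 1) * k / 2 = k * (k - 1) / 2 + k := by
  cases k with
  | zero => rfl
  | succ j =>
    have h2 : 2 ∣ (j + 1) * j := by
      rw [mul_comm]
      exact (Nat.even_mul_succ_self j).two_dvd
    obtain ⟨t, ht⟩ := h2
    rw [Nat.succ_sub_one,
      show (j + 1 + 1) * (j + 1) = (j + 1) * j + 2 * (j + 1) from by ring, ht]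
    omega

lemma poch_one_fe (a : K) : poch 1 a = (1 - C (R := K) a * X) * rescale qq (poch 1 a) := by
  apply PowerSeries.ext
  intro k
  cases k with
  | zero =>
    rw [coeff_zero_one_sub_mul, coeff_rescale, pow_zero, one_mul]
  | succ k =>
    rw [coeff_one_sub_mul, coeff_rescale, coeff_rescale, poch, coeff_mk, coeff_mk]
    simp only [Nat.div_one, Nat.one_dvd, ne_eq, one_ne_zero, not_false_eq_true, and_self,
      if_true]
    have e1 : qfac (k + 1) = qfac k * (1 - qq ^ (k + 1)) := Finset.prod_range_succ _ k
    have hF : qfac k ≠ 0 := qfac_ne_zero k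
    have hne : (1 : K) - qq ^ (k + 1) ≠ 0 := one_sub_qq_pow_ne_zero (Nat.succ_ne_zero k)
    rw [Nat.succ_sub_one, tri k, pow_add, e1]
    field_simp
    ring

lemma poch_one_eq (a : K) : poch 1 a = Eexp (L1 a) := by
  apply fe_unique a
  · rw [constantCoeff_Eexp, poch, coeff_mk]
    simp [qfac]
  · exact poch_one_fe a
  · conv_lhs => rw [L1_fe a]
    rw [Eexp_add (constantCoeff_Lam a)
        (by rw [← coeff_zero_eq_constantCoeff_apply, coeff_rescale, pow_zero, one_mul,
          coeff_zero_eq_constantCoeff_apply, constantCoeff_L1]),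
      Eexp_Lam, Eexp_rescale]

def Dn (n : ℕ) (f : PowerSeries K) : PowerSeries K :=
  PowerSeries.mk fun k => if n ∣ k then coeff (R := K) (k / n) f else 0

lemma coeff_Dn (n : ℕ) (f : PowerSeries K) (k : ℕ) :
    coeff (R := K) k (Dn n f) = if n ∣ k then coeff (R := K) (k / n) f else 0 := coeff_mk _ _

lemma Dn_one {n : ℕ} (hn : n ≠ 0) : Dn n (1 : PowerSeries K) = 1 := by
  apply PowerSeries.ext
  intro k
  rcases eq_or_ne k 0 with rfl | hk
  · simp [coeff_Dn]
  · rw [coeff_Dn]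
    split_ifs with h
    · have hd : k / n ≠ 0 := fun h0 => hk (by rw [← Nat.div_mul_cancel h, h0, zero_mul])
      rw [coeff_one, coeff_one, if_neg hk, if_neg hd]
    · rw [coeff_one, if_neg hk]

lemma Dn_mul {n : ℕ} (hn : n ≠ 0) (f g : PowerSeries K) :
    Dn n (f * g) = Dn n f * Dn n g := by
  apply PowerSeries.ext
  intro k
  rw [PowerSeries.coeff_mul, coeff_Dn]
  by_cases hk : n ∣ k
  · rw [if_pos hk]
    obtain ⟨k', rfl⟩ := hk
    have hpos : 0 < n := Nat.pos_of_ne_zero hn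
    have hdiv : n * k' / n = k' := Nat.mul_div_cancel_left _ hpos
    rw [hdiv, PowerSeries.coeff_mul]
    have hemb : Function.Injective (fun p : ℕ × ℕ => (n * p.1, n * p.2)) := by
      intro p q h
      rw [Prod.ext_iff] at h ⊢
      exact ⟨Nat.eq_of_mul_eq_mul_left hpos h.1, Nat.eq_of_mul_eq_mul_left hpos h.2⟩
    set e : ℕ × ℕ ↪ ℕ × ℕ := ⟨fun p => (n * p.1, n * p.2), hemb⟩ with he
    have hsub : (Finset.HasAntidiagonal.antidiagonal k').map e ⊆ Finset.HasAntidiagonal.antidiagonal (n * k') := by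
      intro p hp
      rw [Finset.mem_map] at hp
      obtain ⟨q, hq, rfl⟩ := hp
      rw [Finset.HasAntidiagonal.mem_antidiagonal] at hq ⊢
      show n * q.1 + n * q.2 = n * k'
      rw [← Nat.left_distrib, hq]
    have hvanish : ∀ p ∈ Finset.HasAntidiagonal.antidiagonal (n * k'),
        p ∉ (Finset.HasAntidiagonal.antidiagonal k').map e →
        coeff (R := K) p.1 (Dn n f) * coeff (R := K) p.2 (Dn n g) = 0 := by
      intro p hp hpn
      rw [Finset.HasAntidiagonal.mem_antidiagonal] at hp
      by_cases h1 : n ∣ p.1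
      · by_cases h2 : n ∣ p.2
        · exfalso
          obtain ⟨a, ha⟩ := h1
          obtain ⟨b, hb⟩ := h2
          apply hpn
          rw [Finset.mem_map]
          refine ⟨(a, b), Finset.HasAntidiagonal.mem_antidiagonal.2 ?_, ?_⟩
          · apply Nat.eq_of_mul_eq_mul_left hpos
            rw [Nat.left_distrib, ← ha, ← hb, hp]
          · show (n * a, n * b) = p
            rw [Prod.ext_iff]
            exact ⟨ha.symm, hb.symm⟩
        · rw [show coeff (R := K) p.2 (Dn n g) = 0 from by rw [coeff_Dn, if_neg h2], mul_zero]
      · rw [coeff_Dn, if_neg h1, zero_mul]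
    rw [← Finset.sum_subset hsub hvanish, Finset.sum_map]
    apply Finset.sum_congr rfl
    intro q _
    show coeff (R := K) q.1 f * coeff (R := K) q.2 g
      = coeff (R := K) (n * q.1) (Dn n f) * coeff (R := K) (n * q.2) (Dn n g)
    rw [coeff_Dn, coeff_Dn, if_pos (dvd_mul_right n q.1), if_pos (dvd_mul_right n q.2),
      Nat.mul_div_cancel_left _ hpos, Nat.mul_div_cancel_left _ hpos]
  · rw [if_neg hk]
    symm
    apply Finset.sum_eq_zero
    intro p hp
    rw [Finset.HasAntidiagonal.mem_antidiagonal] at hp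
    by_cases h1 : n ∣ p.1
    · have h2 : ¬ n ∣ p.2 := fun h2 => hk (hp ▸ Nat.dvd_add h1 h2)
      rw [show coeff (R := K) p.2 (Dn n g) = 0 from by rw [coeff_Dn, if_neg h2], mul_zero]
    · rw [coeff_Dn, if_neg h1, zero_mul]

lemma Dn_pow {n : ℕ} (hn : n ≠ 0) (f : PowerSeries K) (j : ℕ) :
    Dn n (f ^ j) = Dn n f ^ j := by
  induction j with
  | zero => rw [pow_zero, pow_zero, Dn_one hn]
  | succ j ih => rw [pow_succ, pow_succ, Dn_mul hn, ih]

lemma constantCoeff_Dn (n : ℕ) {f : PowerSeries K} (hf : constantCoeff (R := K) f = 0) :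
    constantCoeff (R := K) (Dn n f) = 0 := by
  rw [← coeff_zero_eq_constantCoeff_apply, coeff_Dn, if_pos (dvd_zero n), Nat.zero_div,
    coeff_zero_eq_constantCoeff_apply, hf]

lemma Eexp_Dn {n : ℕ} (hn : n ≠ 0) {L : PowerSeries K} (hL : constantCoeff (R := K) L = 0) :
    Eexp (Dn n L) = Dn n (Eexp L) := by
  apply PowerSeries.ext
  intro k
  have e1 : coeff (R := K) k (Eexp (Dn n L)) = ∑ j ∈ Finset.range (k + 1),
      ((j.factorial : K))⁻¹ * coeff (R := K) k (Dn n (L ^ j)) := by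
    rw [Eexp, coeff_mk, map_sum]
    apply Finset.sum_congr rfl
    intro j _
    rw [coeff_C_mul, Dn_pow hn]
  rw [e1, coeff_Dn]
  by_cases hk : n ∣ k
  · rw [if_pos hk]
    have hle : k / n ≤ k := Nat.div_le_self k n
    rw [coeff_Eexp_trunc hL (Nat.lt_succ_of_le hle), map_sum]
    apply Finset.sum_congr rfl
    intro j _
    rw [coeff_C_mul, coeff_Dn, if_pos hk]
  · rw [if_neg hk]
    apply Finset.sum_eq_zero
    intro j _
    rw [coeff_Dn, if_neg hk, mul_zero]

lemma poch_Dn {n : ℕ} (hn : n ≠ 0) (a : K) : poch n a = Dn n (poch 1 a) := by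
  apply PowerSeries.ext
  intro k
  rw [coeff_Dn, poch, poch, coeff_mk]
  by_cases hk : n ∣ k
  · rw [if_pos hk, if_pos ⟨hk, hn⟩, coeff_mk]
    simp

  · rw [if_neg hk, if_neg (fun h => hk h.1)]

lemma poch_eq {n : ℕ} (hn : n ≠ 0) (a : K) : poch n a = Eexp (Dn n (L1 a)) := by
  rw [poch_Dn hn, poch_one_eq, Eexp_Dn hn (constantCoeff_L1 a)]

lemma coeff_pow_congr {A B : PowerSeries K} {k : ℕ}
    (h : ∀ j ≤ k, coeff (R := K) j A = coeff (R := K) j B) (m : ℕ) :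
    ∀ j ≤ k, coeff (R := K) j (A ^ m) = coeff (R := K) j (B ^ m) := by
  induction m with
  | zero => intro j _; rfl
  | succ m ih =>
    intro j hj
    rw [pow_succ, pow_succ, PowerSeries.coeff_mul, PowerSeries.coeff_mul]
    apply Finset.sum_congr rfl
    intro p hp
    rw [Finset.HasAntidiagonal.mem_antidiagonal] at hp
    have h1 : p.1 ≤ k := le_trans (hp ▸ Nat.le_add_right p.1 p.2) hj
    have h2 : p.2 ≤ k := le_trans (hp ▸ Nat.le_add_left p.2 p.1) hj
    rw [ih p.1 h1, h p.2 h2]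

lemma coeff_Eexp_congr {A B : PowerSeries K} {k : ℕ}
    (h : ∀ j ≤ k, coeff (R := K) j A = coeff (R := K) j B) :
    coeff (R := K) k (Eexp A) = coeff (R := K) k (Eexp B) := by
  rw [Eexp, Eexp, coeff_mk, coeff_mk, map_sum, map_sum]
  apply Finset.sum_congr rfl
  intro j _
  rw [coeff_C_mul, coeff_C_mul, coeff_pow_congr h j k le_rfl]

lemma constantCoeff_smul_Dn (n : ℕ) (z : ℤ) (a : K) :
    constantCoeff (R := K) (z • Dn n (L1 a)) = 0 := by
  rw [map_zsmul, constantCoeff_Dn n (constantCoeff_L1 a), zsmul_eq_mul, mul_zero]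

lemma coeff_T {c : ℕ → (ℤ →₀ ℤ)} {k j : ℕ} (hj : j ≤ k) :
    coeff (R := K) j (∑ n ∈ Finset.Icc 1 k, ∑ i ∈ (c n).support, (c n i) • Dn n (L1 (sp i)))
      = coeff (R := K) j (Lser c) := by
  rcases eq_or_ne j 0 with rfl | hj0
  · rw [Lser, coeff_mk, if_pos rfl, map_sum]
    apply Finset.sum_eq_zero
    intro n _
    rw [map_sum]
    apply Finset.sum_eq_zero
    intro i _
    rw [coeff_zero_eq_constantCoeff_apply, constantCoeff_smul_Dn]
  · rw [Lser, coeff_mk, if_neg hj0, map_sum,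
      ← Nat.sum_div_divisors j (fun m => (∑ i ∈ (c (j / m)).support,
          HahnSeries.single ((m : ℤ) * i) ((c (j / m) i : ℚ))) / ((m : K) * (1 - qq ^ m))),
      ← Finset.sum_neg_distrib]
    rw [← Finset.sum_subset (show j.divisors ⊆ Finset.Icc 1 k from ?_) ?_]
    rotate_left
    · intro n hn
      rw [Nat.mem_divisors] at hn
      rw [Finset.mem_Icc]
      have h1 : n ≠ 0 := fun h => hj0 (by simpa [h] using hn.1)
      exact ⟨Nat.one_le_iff_ne_zero.2 h1, le_trans (Nat.le_of_dvd (Nat.pos_of_ne_zero hj0) hn.1) hj⟩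
    · intro n _ hnd
      rw [map_sum]
      apply Finset.sum_eq_zero
      intro i _
      have hndvd : ¬ n ∣ j := fun h => hnd (Nat.mem_divisors.2 ⟨h, hj0⟩)
      rw [map_zsmul, coeff_Dn, if_neg hndvd, zsmul_eq_mul, mul_zero]
    apply Finset.sum_congr rfl
    intro n hn
    rw [Nat.mem_divisors] at hn
    have hnz : n ≠ 0 := fun h => hj0 (by simpa [h] using hn.1)
    have hdd : j / (j / n) = n := Nat.div_div_self hn.1 hj0
    have hm0 : j / n ≠ 0 :=
      Nat.div_ne_zero_iff.2 ⟨hnz, Nat.le_of_dvd (Nat.pos_of_ne_zero hj0) hn.1⟩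
    rw [hdd, map_sum]
    rw [show -((∑ i ∈ (c n).support, HahnSeries.single (((j / n : ℕ) : ℤ) * i) ((c n i : ℚ)))
          / (((j / n : ℕ) : K) * (1 - qq ^ (j / n))))
        = ∑ i ∈ (c n).support, -(HahnSeries.single (((j / n : ℕ) : ℤ) * i) ((c n i : ℚ))
          / (((j / n : ℕ) : K) * (1 - qq ^ (j / n)))) from by
      rw [Finset.sum_div, ← Finset.sum_neg_distrib]]
    apply Finset.sum_congr rfl
    intro i _
    rw [map_zsmul, coeff_Dn, if_pos hn.1, L1, coeff_mk, if_neg hm0]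
    have hsp : (sp i) ^ (j / n) = HahnSeries.single (((j / n : ℕ) : ℤ) * i) ((1 : ℚ)) := by
      rw [sp, HahnSeries.single_pow, one_pow, nsmul_eq_mul]
    have hz : ((c n i : ℤ) : K) * HahnSeries.single (((j / n : ℕ) : ℤ) * i) ((1 : ℚ))
        = HahnSeries.single (((j / n : ℕ) : ℤ) * i) ((c n i : ℚ)) := by
      rw [show ((c n i : ℤ) : K) = HahnSeries.C ((c n i : ℚ)) from
          (map_intCast (HahnSeries.C : ℚ →+* K) (c n i)).symm,
        HahnSeries.C_apply, HahnSeries.single_mul_single, zero_add, mul_one]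
    rw [zsmul_eq_mul, hsp, ← hz]
    ring

lemma key (c : ℕ → (ℤ →₀ ℤ)) (k : ℕ) :
    coeff (R := K) k (∏ n ∈ Finset.Icc 1 k, ∏ i ∈ (c n).support, zpw (poch n (sp i)) (c n i))
      = coeff (R := K) k (Eexp (Lser c)) := by
  have hprod : (∏ n ∈ Finset.Icc 1 k, ∏ i ∈ (c n).support, zpw (poch n (sp i)) (c n i))
      = Eexp (∑ n ∈ Finset.Icc 1 k, ∑ i ∈ (c n).support, (c n i) • Dn n (L1 (sp i))) := by
    rw [← prod_Eexp _ _ (fun n _ => by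
      rw [map_sum]
      exact Finset.sum_eq_zero fun i _ => constantCoeff_smul_Dn n (c n i) (sp i))]
    apply Finset.prod_congr rfl
    intro n hn
    have hn1 : n ≠ 0 := by
      have := (Finset.mem_Icc.1 hn).1
      omega
    rw [← prod_Eexp _ _ (fun i _ => constantCoeff_smul_Dn n (c n i) (sp i))]
    apply Finset.prod_congr rfl
    intro i _
    rw [poch_eq hn1, zpw_Eexp (constantCoeff_Dn n (constantCoeff_L1 _))]
  rw [hprod]
  exact coeff_Eexp_congr fun j hj => coeff_T hj


theorem stmt15 (F : PowerSeries K) (h0 : PowerSeries.coeff (R := K) 0 F = 1) :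
    Admissible F ↔
      ∃ f : ℕ → (ℤ →₀ ℤ),
        ∀ k, PowerSeries.coeff (R := K) k F = PowerSeries.coeff (R := K) k (Eexp (Lser f)) := by
  constructor
  · rintro ⟨c, hc⟩
    exact ⟨c, fun k => (hc k).trans (key c k)⟩
  · rintro ⟨f, hf⟩
    exact ⟨f, fun k => (hf k).trans (key f k).symm⟩

end

end Stmt15
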